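/- For dismal numbers p ≪ m and q ≪ n (dominance in each digit), we have p ⊞ q ≪ m ⊞ n and p ⊠ q ≪ m ⊠ n. -/

import Mathlib

/-- The `i`-th base-`b` digit of `n`. -/
def digit (b n i : ℕ) : ℕ := n / b ^ i % b

/-- Dismal addition in base `b`: digitwise maximum of base-`b` digits. -/
def dadd (b m n : ℕ) : ℕ :=
  ∑ i ∈ Finset.range (m + n + 1), max (digit b m i) (digit b n i) * b ^ i

/-- Dismal multiplication in base `b`: digit convolution with `min` as digit
product and `max` as digit sum (no carries). -/
def dmul (b m n : ℕ) : ℕ :=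
  ∑ k ∈ Finset.range (m + n + 1),
    ((Finset.range (k + 1)).sup fun i => min (digit b m i) (digit b n (k - i))) * b ^ k

/-- The number of base-`b` digits of `n`. -/
def dlen (b n : ℕ) : ℕ := (Nat.digits b n).length

/-- Digitwise dominance: every base-`b` digit of `p` is at most the
corresponding digit of `n`. -/
def ddom (b p n : ℕ) : Prop := ∀ i, digit b p i ≤ digit b n i

lemma digit_lt (b n i : ℕ) (hb : 2 ≤ b) : digit b n i < b :=
  Nat.mod_lt _ (by omega)

lemma digit_zero (b n i : ℕ) (hb : 2 ≤ b) (h : n ≤ i) : digit b n i = 0 := by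
  have h1 : n < 2 ^ i := lt_of_le_of_lt h (Nat.lt_two_pow_self (n := i))
  have h2 : n < b ^ i := lt_of_lt_of_le h1 (Nat.pow_le_pow_left hb i)
  simp [digit, Nat.div_eq_of_lt h2]

lemma digit_sum (b : ℕ) (hb : 2 ≤ b) :
    ∀ (j N : ℕ) (c : ℕ → ℕ), (∀ i, c i < b) →
    digit b (∑ i ∈ Finset.range N, c i * b ^ i) j = if j < N then c j else 0 := by
  have hb0 : 0 < b := by omega
  intro j
  induction j with
  | zero =>
    intro N c hc
    cases N with
    | zero => simp [digit]
    | succ M =>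
      rw [Finset.sum_range_succ']
      have hrw : ∀ i, c (i + 1) * b ^ (i + 1) = b * (c (i + 1) * b ^ i) := by
        intro i; ring
      rw [Finset.sum_congr rfl (fun i _ => hrw i), ← Finset.mul_sum]
      simp [digit, Nat.mul_add_mod, Nat.mod_eq_of_lt (hc 0)]
  | succ j ih =>
    intro N c hc
    cases N with
    | zero => simp [digit]
    | succ M =>
      have key : (∑ i ∈ Finset.range (M + 1), c i * b ^ i) / b
          = ∑ i ∈ Finset.range M, c (i + 1) * b ^ i := by
        rw [Finset.sum_range_succ']
        have hrw : ∀ i, c (i + 1) * b ^ (i + 1) = b * (c (i + 1) * b ^ i) := by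
          intro i; ring
        rw [Finset.sum_congr rfl (fun i _ => hrw i), ← Finset.mul_sum, add_comm,
          Nat.add_mul_div_left _ _ hb0]
        simp [Nat.div_eq_of_lt (hc 0)]
      have step : digit b (∑ i ∈ Finset.range (M + 1), c i * b ^ i) (j + 1)
          = digit b ((∑ i ∈ Finset.range (M + 1), c i * b ^ i) / b) j := by
        simp [digit, pow_succ', Nat.div_div_eq_div_mul]
      rw [step, key, ih M (fun i => c (i + 1)) (fun i => hc (i + 1))]
      simp [Nat.succ_lt_succ_iff]

/-- dominance is preserved by dismal addition and multiplication. -/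
theorem dismal_dom_add_mul (b : ℕ) (hb : 2 ≤ b) (p q m n : ℕ)
    (hp : ddom b p m) (hq : ddom b q n) :
    ddom b (dadd b p q) (dadd b m n) ∧ ddom b (dmul b p q) (dmul b m n) := by
  constructor
  · intro j
    unfold dadd
    rw [digit_sum b hb j _ _ (fun i => max_lt (digit_lt b p i hb) (digit_lt b q i hb)),
      digit_sum b hb j _ _ (fun i => max_lt (digit_lt b m i hb) (digit_lt b n i hb))]
    split_ifs with h1 h2 h2
    · exact max_le_max (hp j) (hq j)
    · have hm0 : digit b m j = 0 := digit_zero b m j hb (by omega)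
      have hn0 : digit b n j = 0 := digit_zero b n j hb (by omega)
      have h3 := hp j
      have h4 := hq j
      exact Nat.max_le.mpr ⟨by omega, by omega⟩
    · exact Nat.zero_le _
    · exact Nat.zero_le _
  · intro k
    unfold dmul
    rw [digit_sum b hb k _ _ (fun kk => Finset.sup_lt_iff (show (⊥ : ℕ) < b by
        simpa using (by omega : 0 < b)) |>.mpr
        (fun i _ => lt_of_le_of_lt (min_le_left _ _) (digit_lt b p i hb))),
      digit_sum b hb k _ _ (fun kk => Finset.sup_lt_iff (show (⊥ : ℕ) < b by
        simpa using (by omega : 0 < b)) |>.mpr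
        (fun i _ => lt_of_le_of_lt (min_le_left _ _) (digit_lt b m i hb)))]
    split_ifs with h1 h2 h2
    · exact Finset.sup_mono_fun (fun i _ => min_le_min (hp i) (hq (k - i)))
    · apply Finset.sup_le
      intro i hi
      have hik : i ≤ k := by
        have := Finset.mem_range.mp hi; omega
      rcases le_or_gt m i with h | h
      · have hm0 : digit b m i = 0 := digit_zero b m i hb h
        have h3 := hp i
        have h4 := min_le_left (digit b p i) (digit b q (k - i))
        omega
      · have hn : n ≤ k - i := by omega
        have hn0 : digit b n (k - i) = 0 := digit_zero b n (k - i) hb hn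
        have h3 := hq (k - i)
        have h4 := min_le_right (digit b p i) (digit b q (k - i))
        omega
    · exact Nat.zero_le _
    · exact Nat.zero_le _
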